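/- For positive integers c, d ≥ 2, the intersection over all n ∈ ℕ of the sets (d/c)^n · ℕ := {(d/c)^n · m | m ∈ ℕ} ⊆ ℚ equals {0} if and only if d does not divide c. -/

import Mathlib

theorem iInter_pow_ratio_eq_zero_iff (c d : ℕ) (hc : 2 ≤ c) (hd : 2 ≤ d) :
    (⋂ n : ℕ, {q : ℚ | ∃ m : ℕ, q = (d : ℚ) ^ n * m / (c : ℚ) ^ n}) = {0} ↔
      ¬ (d ∣ c) := by
  have hc0 : c ≠ 0 := by omega
  have hd0 : d ≠ 0 := by omega
  have hcQ : (c : ℚ) ≠ 0 := Nat.cast_ne_zero.mpr hc0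
  have hdQ : (d : ℚ) ≠ 0 := Nat.cast_ne_zero.mpr hd0
  constructor
  · intro heq hdvd
    obtain ⟨k, hk⟩ := hdvd
    have h1 : (1 : ℚ) ∈ ⋂ n : ℕ, {q : ℚ | ∃ m : ℕ, q = (d : ℚ) ^ n * m / (c : ℚ) ^ n} := by
      refine Set.mem_iInter.mpr fun n => ⟨k ^ n, ?_⟩
      have : (c : ℚ) = (d : ℚ) * k := by exact_mod_cast congrArg (Nat.cast : ℕ → ℚ) hk
      rw [this]
      push_cast
      rw [mul_pow]
      have hkQ : (k : ℚ) ≠ 0 := Nat.cast_ne_zero.mpr (by rintro rfl; simp at hk; omega)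
      rw [eq_comm, div_eq_one_iff_eq (mul_ne_zero (pow_ne_zero _ hdQ) (pow_ne_zero _ hkQ))]
    rw [heq] at h1
    exact one_ne_zero h1
  · intro hndvd
    ext q
    simp only [Set.mem_iInter, Set.mem_setOf_eq, Set.mem_singleton_iff]
    constructor
    · intro hq
      by_contra hq0
      -- find a prime p with c.factorization p < d.factorization p
      have hle : ¬ d.factorization ≤ c.factorization := by
        rw [Nat.factorization_le_iff_dvd hd0 hc0]; exact hndvd
      rw [Finsupp.le_def] at hle
      push_neg at hle
      obtain ⟨p, hp⟩ := hle
      have hppos : d.factorization p ≠ 0 := by omega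
      have hpprime : p.Prime := Nat.prime_of_mem_primeFactors
        (by rwa [← Nat.support_factorization, Finsupp.mem_support_iff])
      haveI : Fact p.Prime := ⟨hpprime⟩
      rw [Nat.factorization_def c hpprime, Nat.factorization_def d hpprime] at hp
      set N : ℕ := (padicValRat p q).natAbs + 1 with hN
      obtain ⟨m, hm⟩ := hq N
      have hmQ : (m : ℚ) ≠ 0 := by
        intro h; apply hq0; rw [hm, h]; simp
      have hval : padicValRat p q =
          (N : ℤ) * padicValNat p d + padicValNat p m - (N : ℤ) * padicValNat p c := by
        rw [hm, padicValRat.div (mul_ne_zero (pow_ne_zero _ hdQ) hmQ) (pow_ne_zero _ hcQ),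
          padicValRat.mul (pow_ne_zero _ hdQ) hmQ, padicValRat.pow (d : ℚ),
          padicValRat.pow (c : ℚ), padicValRat.of_nat, padicValRat.of_nat, padicValRat.of_nat]
      have h1 : (padicValNat p c : ℤ) + 1 ≤ (padicValNat p d : ℤ) := by exact_mod_cast hp
      have h2 : (N : ℤ) ≤ padicValRat p q := by
        rw [hval]
        nlinarith [Int.natCast_nonneg (padicValNat p m), Int.natCast_nonneg N,
          (show (0:ℤ) < (N:ℤ) from by exact_mod_cast Nat.succ_pos _)]
      have h3 : padicValRat p q < (N : ℤ) := by
        have := Int.le_natAbs (a := padicValRat p q)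
        omega
      omega
    · intro h
      exact fun n => ⟨0, by simp [h]⟩
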